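/- Let u₁ ≥lex u₂ ≥lex ⋯ ≥lex u_n be a non-increasing sequence of finite Lyndon words. Then u₁ is the longest prefix of the product u₁u₂⋯u_n that is a Lyndon word. -/

import Mathlib

/-- A finite word is a Lyndon word if it is nonempty and lexicographically
strictly smaller than all of its proper nonempty suffixes. -/
def IsLyndon {A : Type*} [LinearOrder A] (w : List A) : Prop :=
  w ≠ [] ∧ ∀ i : ℕ, 0 < i → i < w.length → w < w.drop i

section Helpers

variable {A : Type*} [LinearOrder A]

private lemma lex_of_lt {x y : List A} (h : x < y) : List.Lex (· < ·) x y := h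

private lemma lt_of_lex {x y : List A} (h : List.Lex (· < ·) x y) : x < y := h

/-- A prefix is lexicographically ≤ the ambient word. -/
private lemma prefix_le {x y : List A} (h : x <+: y) : x ≤ y := by
  obtain ⟨t, rfl⟩ := h
  rcases t with _ | ⟨a, t⟩
  · simp
  · refine le_of_lt (lt_of_lex ?_)
    induction x with
    | nil => exact List.Lex.nil
    | cons b x ih => exact List.Lex.cons ih

/-- Cancel a common left factor in a strict lex inequality. -/
private lemma append_lt_append_left' (u x y : List A) : u ++ x < u ++ y → x < y := by
  induction u with
  | nil => exact id
  | cons a u ih => exact fun h => ih (lt_of_lex (List.lex_cons_iff.mp (lex_of_lt h)))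

private lemma append_lt_append_left {u x y : List A} (h : u ++ x < u ++ y) : x < y :=
  append_lt_append_left' u x y h

private lemma append_le_append_left {u x y : List A} (h : x ≤ y) : u ++ x ≤ u ++ y := by
  by_contra hc
  exact absurd (append_lt_append_left (lt_of_not_ge hc)) (not_lt_of_ge h)

/-- If `x < y` but `x` is not a prefix of `y`, the inequality is witnessed by a
strictly smaller letter, hence survives arbitrary right extensions. -/
private lemma lt_append_of_lt_not_prefix {x y : List A} (h : x < y) (hp : ¬ x <+: y)
    (s t : List A) : x ++ s < y ++ t := by
  refine lt_of_lex ?_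
  have h' := lex_of_lt h
  clear h
  induction h' with
  | nil => exact absurd (List.nil_prefix) hp
  | @cons a l₁ l₂ _ ih =>
      refine List.Lex.cons (ih ?_)
      intro hpre
      exact hp (List.cons_prefix_cons.mpr ⟨rfl, hpre⟩)
  | rel hab => exact List.Lex.rel hab

/-- Key claim: if `r` is a prefix of the concatenation of Lyndon words all `≤ w`,
with `w` Lyndon, then `r ≤ w ++ r`. -/
private lemma key_claim (w : List A) (hw : IsLyndon w) :
    ∀ n (r : List A), r.length ≤ n → ∀ L : List (List A),
      (∀ u ∈ L, IsLyndon u ∧ u ≤ w) → r <+: L.flatten → r ≤ w ++ r := by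
  intro n
  induction n with
  | zero =>
      intro r hr L _ _
      rw [List.length_eq_zero_iff.mp (Nat.le_zero.mp hr)]
      exact prefix_le List.nil_prefix
  | succ n ih =>
      intro r hr L hL hpre
      rcases L with _ | ⟨u, L'⟩
      · simp only [List.flatten_nil, List.prefix_nil] at hpre
        subst hpre; exact prefix_le List.nil_prefix
      obtain ⟨hu_ly, hu_le⟩ := hL u (by simp)
      simp only [List.flatten_cons] at hpre
      rcases le_or_gt r.length u.length with hlen | hlen
      · -- r is a prefix of u
        have hru : r <+: u := List.prefix_of_prefix_length_le hpre (u.prefix_append _) hlen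
        calc r ≤ u := prefix_le hru
          _ ≤ w := hu_le
          _ ≤ w ++ r := prefix_le (List.prefix_append w r)
      · -- u is a proper prefix of r
        have hur : u <+: r := List.prefix_of_prefix_length_le (u.prefix_append _) hpre hlen.le
        obtain ⟨r₂, rfl⟩ := hur
        have hr₂ : r₂ <+: L'.flatten := (List.prefix_append_right_inj u).mp hpre
        have hune : u ≠ [] := hu_ly.1
        have hr₂len : r₂.length ≤ n := by
          have : 0 < u.length := List.length_pos_iff.mpr hune
          simp only [List.length_append] at hr
          omega
        have ihr₂ : r₂ ≤ w ++ r₂ :=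
          ih r₂ hr₂len L' (fun v hv => hL v (by simp [hv])) hr₂
        by_cases hpuw : u <+: w
        · obtain ⟨t, rfl⟩ := hpuw
          rcases t with _ | ⟨a, t⟩
          · -- u = w
            simp only [List.append_nil] at ihr₂ ⊢
            exact append_le_append_left ihr₂
          · -- w = u ++ (a :: t), t proper nonempty suffix
            set tt : List A := a :: t with htt
            have hwt : (u ++ tt) < tt := by
              have := hw.2 u.length (List.length_pos_iff.mpr hune)
                (by simp [List.length_append, htt])
              simpa using this
            have hnp : ¬ (u ++ tt) <+: tt := by
              intro hc
              have := hc.length_le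
              simp only [List.length_append] at this
              have : 0 < u.length := List.length_pos_iff.mpr hune
              omega
            have hstep : (u ++ tt) ++ r₂ < tt ++ (u ++ r₂) :=
              lt_append_of_lt_not_prefix hwt hnp r₂ _
            have : r₂ ≤ tt ++ (u ++ r₂) := le_of_lt (lt_of_le_of_lt ihr₂ hstep)
            have := append_le_append_left (u := u) this
            simpa [List.append_assoc] using this
        · -- u < w not by prefix
          have huw : u < w := lt_of_le_of_ne hu_le (fun h => hpuw (h ▸ List.prefix_rfl))
          exact le_of_lt (lt_append_of_lt_not_prefix huw hpuw r₂ (u ++ r₂))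

end Helpers

theorem longest_lyndon_prefix {A : Type*} [LinearOrder A]
    (w : List A) (L : List (List A))
    (hly : ∀ v ∈ w :: L, IsLyndon v)
    (hmono : (w :: L).Chain' (fun a b => b ≤ a)) :
    w <+: (w :: L).flatten ∧
    ∀ p : List A, p <+: (w :: L).flatten → IsLyndon p → p.length ≤ w.length := by
  have hwly : IsLyndon w := hly w (by simp)
  constructor
  · simpa only [List.flatten_cons] using w.prefix_append L.flatten
  · intro p hp hply
    by_contra hlen
    have hlen : w.length < p.length := lt_of_not_ge hlen
    -- w is a prefix of p
    have hwp : w <+: p := by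
      refine List.prefix_of_prefix_length_le ?_ hp hlen.le
      simpa only [List.flatten_cons] using w.prefix_append L.flatten
    obtain ⟨r, rfl⟩ := hwp
    have hrne : r ≠ [] := by
      intro h; subst h; simp at hlen
    -- r is a prefix of L.flatten
    have hrL : r <+: L.flatten := by
      have : w ++ r <+: w ++ L.flatten := by simpa using hp
      exact (List.prefix_append_right_inj w).mp this
    -- every u ∈ L is Lyndon and ≤ w
    have hLle : ∀ u ∈ L, IsLyndon u ∧ u ≤ w := by
      intro u hu
      refine ⟨hly u (by simp [hu]), ?_⟩
      have hpw : (w :: L).Pairwise (fun a b => b ≤ a) :=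
        List.isChain_iff_pairwise.mp hmono
      exact (List.pairwise_cons.mp hpw).1 u hu
    -- Lyndon property of p at i = |w| gives p < r
    have hpr : w ++ r < r := by
      have := hply.2 w.length (List.length_pos_iff.mpr hwly.1)
        (by simp [List.length_append] at hlen ⊢; omega)
      simpa using this
    -- key claim gives r ≤ w ++ r
    have := key_claim w hwly r.length r le_rfl L hLle hrL
    exact absurd hpr (not_lt_of_ge this)
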